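/- Let X be a building of type (W,S) and let R and R' be residues. Then proj_{R'}(R) and proj_R(R') are parallel residues. -/

import Mathlib

noncomputable section

open scoped Classical

namespace RAB

variable {B W : Type*} [Group W] {M : CoxeterMatrix B}

/-- The Coxeter system `cs` is right-angled: the order `m(s,t)` of `s*t` is `2` or `∞`
(infinite order being encoded by `orderOf _ = 0`) for all distinct simple reflections. -/
def IsRightAngled (cs : CoxeterSystem M W) : Prop :=
  ∀ i j : B, i ≠ j →
    orderOf (cs.simple i * cs.simple j) = 2 ∨ orderOf (cs.simple i * cs.simple j) = 0

/-- The graph on the simple system joining `i, j` whenever `m(s_i, s_j) ≠ 2`. -/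
def coxeterGraph (cs : CoxeterSystem M W) : SimpleGraph B where
  Adj i j := i ≠ j ∧ orderOf (cs.simple i * cs.simple j) ≠ 2
  symm := by
    constructor
    rintro i j ⟨hij, h2⟩
    refine ⟨hij.symm, fun h => h2 ?_⟩
    have hsc : SemiconjBy (cs.simple i) (cs.simple j * cs.simple i)
        (cs.simple i * cs.simple j) := by
      unfold SemiconjBy
      group
    rw [← hsc.orderOf_eq (cs.simple i)]
    exact h
  loopless := ⟨fun i h => h.1 rfl⟩

/-- `(W, S)` is irreducible: the graph on `S` joining `s, t` whenever `m(s,t) ≠ 2`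
is connected. -/
def IsIrreducible (cs : CoxeterSystem M W) : Prop := (coxeterGraph cs).Connected

/-- `J⊥ = {i ∈ S \ J : m(i,j) = 2 for all j ∈ J}`. -/
def perp (cs : CoxeterSystem M W) (J : Set B) : Set B :=
  {i : B | i ∉ J ∧ ∀ j ∈ J, orderOf (cs.simple i * cs.simple j) = 2}

/-- The Cayley graph of `W` with respect to the simple system, joining `u ≠ v`
whenever `u⁻¹ * v` is a simple reflection. -/
def cayleyGraph (cs : CoxeterSystem M W) : SimpleGraph W where
  Adj u v := u ≠ v ∧ u⁻¹ * v ∈ Set.range cs.simple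
  symm := by
    constructor
    rintro u v ⟨huv, i, hi⟩
    refine ⟨huv.symm, i, ?_⟩
    calc cs.simple i = (cs.simple i)⁻¹ := (cs.inv_simple i).symm
      _ = (u⁻¹ * v)⁻¹ := by rw [hi]
      _ = v⁻¹ * u := by group
  loopless := ⟨fun u h => h.1 rfl⟩

/-- A building of type `(W, S)`, where the Coxeter system with simple system `S`
indexed by `B` is `cs`: a nonempty set `C` of chambers together with a Weyl
distance `δ : C × C → W` satisfying the three building axioms. -/
structure Building (cs : CoxeterSystem M W) (C : Type*) where
  nonempty : Nonempty C
  δ : C → C → W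
  delta_eq_one_iff : ∀ x y : C, δ x y = 1 ↔ x = y
  delta_mem_pair : ∀ (x y z : C) (i : B), δ y z = cs.simple i →
    δ x z = δ x y ∨ δ x z = δ x y * cs.simple i
  delta_eq_of_length : ∀ (x y z : C) (i : B), δ y z = cs.simple i →
    cs.length (δ x y * cs.simple i) = cs.length (δ x y) + 1 →
    δ x z = δ x y * cs.simple i
  exists_delta : ∀ (x y : C) (i : B), ∃ z : C,
    δ y z = cs.simple i ∧ δ x z = δ x y * cs.simple i

namespace Building

variable {C : Type*} {cs : CoxeterSystem M W} (X : Building cs C)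

/-- The gallery distance between two chambers. -/
def dist (x y : C) : ℕ := cs.length (X.δ x y)

/-- The residue of type `J` containing the chamber `c`. -/
def Res (J : Set B) (c : C) : Set C :=
  {x : C | X.δ c x ∈ Subgroup.closure (cs.simple '' J)}

/-- `R` is a residue of type `J`. -/
def IsResidueOfType (J : Set B) (R : Set C) : Prop := ∃ c : C, R = X.Res J c

/-- `R` is a residue. -/
def IsResidue (R : Set C) : Prop := ∃ J : Set B, X.IsResidueOfType J R

/-- `R` is a panel, i.e. a residue of type `{i}` for some `i`. -/
def IsPanel (R : Set C) : Prop := ∃ i : B, X.IsResidueOfType {i} R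

/-- `p` is *the* projection of the chamber `c` on the set `R`: the unique chamber
of `R` at minimal gallery distance from `c`. -/
def IsProj (R : Set C) (c p : C) : Prop :=
  p ∈ R ∧ ∀ x ∈ R, x ≠ p → X.dist c p < X.dist c x

/-- The projection of the chamber `c` on `R` (defaulting to `c` in degenerate
situations where no projection exists). -/
def proj (R : Set C) (c : C) : C :=
  if h : ∃ p : C, X.IsProj R c p then h.choose else c

/-- The projection `proj_R(R') = {proj_R(x) : x ∈ R'}`. -/
def projSet (R R' : Set C) : Set C := X.proj R '' R'

/-- Two sets of chambers (typically residues) are parallel if they project onto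
one another. -/
def Parallel (R R' : Set C) : Prop :=
  X.projSet R R' = R ∧ X.projSet R' R = R'

/-- The gallery distance from a chamber to a residue. -/
def distCR (c : C) (R : Set C) : ℕ := X.dist c (X.proj R c)

/-- The gallery distance between two residues. -/
def distRR (R R' : Set C) : ℕ := sInf ((fun x => X.distCR x R') '' R)

/-- The `J`-wing of the chamber `c`: the set of chambers whose projection to the
`J`-residue of `c` is `c` itself. -/
def wing (J : Set B) (c : C) : Set C := {x : C | X.proj (X.Res J c) x = c}

/-- An apartment: a subset of the chambers in bijection with `W`, the bijection
transporting the Weyl distance to `(u, v) ↦ u⁻¹ * v`. -/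
def IsApartment (A : Set C) : Prop :=
  ∃ f : W → C, Function.Injective f ∧ Set.range f = A ∧
    ∀ u v : W, X.δ (f u) (f v) = u⁻¹ * v

/-- The group of type-preserving automorphisms of the building: all permutations
of the chambers preserving the Weyl distance. -/
def autPlus : Subgroup (Equiv.Perm C) where
  carrier := {g : Equiv.Perm C | ∀ x y : C, X.δ (g x) (g y) = X.δ x y}
  one_mem' := fun _ _ => rfl
  mul_mem' := by
    intro a b ha hb x y
    simp only [Equiv.Perm.mul_apply]
    rw [ha, hb]
  inv_mem' := by
    intro a ha x y
    have h := ha (a⁻¹ x) (a⁻¹ y)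
    simpa using h.symm

/-- The subgroup `U_i(c)` of type-preserving automorphisms fixing the `i`-wing
of `c` pointwise. -/
def U (i : B) (c : C) : Subgroup (Equiv.Perm C) :=
  X.autPlus ⊓ fixingSubgroup (Equiv.Perm C) (X.wing {i} c)

/-- The subgroup `V_i(c)` of type-preserving automorphisms fixing the complement of
the `i`-wing of `c` pointwise. -/
def V (i : B) (c : C) : Subgroup (Equiv.Perm C) :=
  X.autPlus ⊓ fixingSubgroup (Equiv.Perm C) (X.wing {i} c)ᶜ

/-- The building is thick: every panel has at least three chambers. -/
def Thick : Prop := ∀ R : Set C, X.IsPanel R →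
  ∃ x ∈ R, ∃ y ∈ R, ∃ z ∈ R, x ≠ y ∧ x ≠ z ∧ y ≠ z

/-- The building is semi-regular: for each `i`, all panels of type `i` have the
same cardinality. -/
def SemiRegular : Prop := ∀ (i : B) (R R' : Set C),
  X.IsResidueOfType {i} R → X.IsResidueOfType {i} R' → Cardinal.mk R = Cardinal.mk R'

/-- The building is locally finite: every panel is finite. -/
def LocallyFinite : Prop := ∀ R : Set C, X.IsPanel R → R.Finite

/-- The chamber graph of the building: two distinct chambers are joined whenever
their Weyl distance is a simple reflection. -/
def chamberGraph : SimpleGraph C where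
  Adj x y := x ≠ y ∧ X.δ x y ∈ Set.range cs.simple ∧ X.δ y x ∈ Set.range cs.simple
  symm := by constructor; rintro x y ⟨h1, h2, h3⟩; exact ⟨h1.symm, h3, h2⟩
  loopless := ⟨fun x h => h.1 rfl⟩

end Building

end RAB

namespace S7


variable {B W : Type*} [Group W] {M : CoxeterMatrix B} (cs : CoxeterSystem M W)

local prefix:100 "ss" => cs.simple
local prefix:100 "π" => cs.wordProd
local prefix:100 "ℓ" => cs.length

lemma conj_eq_iff {W : Type*} [Group W] (u t v : W) :
    u * t * u⁻¹ = v ↔ t = u⁻¹ * v * u := by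
  constructor
  · intro h; rw [← h]; group
  · intro h; rw [h]; group

variable {B W : Type*} [Group W] {M : CoxeterMatrix B} (cs : CoxeterSystem M W)

local prefix:100 "ss" => cs.simple
local prefix:100 "π" => cs.wordProd
local prefix:100 "ℓ" => cs.length

/-- The sign/reflection permutation attached to a simple reflection. -/
def eta (i : B) : Equiv.Perm (W × ℤˣ) :=
  Function.Involutive.toPerm
    (fun p => (ss i * p.1 * (ss i)⁻¹, (if p.1 = ss i then (-1 : ℤˣ) else 1) * p.2))
    (by
      rintro ⟨t, e⟩
      have hcond : ss i * t * (ss i)⁻¹ = ss i ↔ t = ss i := by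
        rw [conj_eq_iff]
        constructor
        · intro h; rw [h]; group
        · intro h; rw [h]; group
      refine Prod.ext ?_ ?_
      · show ss i * (ss i * t * (ss i)⁻¹) * (ss i)⁻¹ = t
        simp [cs.inv_simple, mul_assoc, cs.simple_mul_simple_cancel_left,
          cs.simple_mul_simple_self]
      · show (if ss i * t * (ss i)⁻¹ = ss i then (-1 : ℤˣ) else 1) *
            ((if t = ss i then (-1 : ℤˣ) else 1) * e) = e
        by_cases h : t = ss i
        · rw [if_pos h, if_pos (hcond.mpr h)]; simp
        · rw [if_neg h, if_neg (fun hc => h (hcond.mp hc))]; simp)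

@[simp] lemma eta_apply (i : B) (t : W) (e : ℤˣ) :
    eta cs i (t, e) = (ss i * t * (ss i)⁻¹, (if t = ss i then (-1 : ℤˣ) else 1) * e) := rfl

lemma key2' {W : Type*} [Group W] (x y : W) (l : ℕ) :
    (y * x) * ((y * x) ^ l * y) * (x * y) = (y * x) ^ (l + 2) * y := by
  have hc : (y * x) * (y * x) ^ l = (y * x) ^ l * (y * x) := by
    rw [← pow_succ', pow_succ]
  have h1 : (y * x) * ((y * x) ^ l * y) * (x * y) = ((y * x) * (y * x) ^ l) * (y * (x * y)) := by
    simp [mul_assoc]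
  rw [h1, hc, pow_add, pow_two]
  simp [mul_assoc]

lemma eta_pow_apply (i j : B) (k : ℕ) (t : W) (e : ℤˣ) :
    ((eta cs i * eta cs j) ^ k) (t, e) =
      ((ss i * ss j) ^ k * t * ((ss i * ss j) ^ k)⁻¹,
        (∏ l ∈ Finset.range (2 * k),
          (if t = (ss j * ss i) ^ l * ss j then (-1 : ℤˣ) else 1)) * e) := by
  have key2 : ∀ l : ℕ, (ss i * ss j)⁻¹ * ((ss j * ss i) ^ l * ss j) * (ss i * ss j)
      = (ss j * ss i) ^ (l + 2) * ss j := by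
    intro l
    have h1 : (ss i * ss j)⁻¹ = ss j * ss i := by
      rw [mul_inv_rev, cs.inv_simple, cs.inv_simple]
    rw [h1]
    exact key2' (ss i) (ss j) l
  induction k generalizing t e with
  | zero => simp
  | succ k ih =>
      rw [pow_succ, Equiv.Perm.mul_apply]
      have hstep : (eta cs i * eta cs j) (t, e) =
          ((ss i * ss j) * t * (ss i * ss j)⁻¹,
            (if t = (ss j * ss i) ^ 1 * ss j then (-1 : ℤˣ) else 1) *
            ((if t = (ss j * ss i) ^ 0 * ss j then (-1 : ℤˣ) else 1) * e)) := by
        rw [Equiv.Perm.mul_apply, eta_apply, eta_apply]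
        refine Prod.ext ?_ ?_
        · show ss i * (ss j * t * (ss j)⁻¹) * (ss i)⁻¹ = _
          rw [mul_inv_rev]
          group
        · show (if ss j * t * (ss j)⁻¹ = ss i then (-1 : ℤˣ) else 1) *
              ((if t = ss j then (-1 : ℤˣ) else 1) * e) = _
          have hc1 : (ss j * t * (ss j)⁻¹ = ss i) ↔ (t = (ss j * ss i) ^ 1 * ss j) := by
            rw [conj_eq_iff, pow_one, cs.inv_simple, mul_assoc]
          have hc0 : (t = ss j) ↔ (t = (ss j * ss i) ^ 0 * ss j) := by
            rw [pow_zero, one_mul]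
          rw [← hc1]
          congr 2
          rw [← hc0]
      rw [hstep, ih]
      refine Prod.ext ?_ ?_
      · show (ss i * ss j) ^ k * (ss i * ss j * t * (ss i * ss j)⁻¹) * ((ss i * ss j) ^ k)⁻¹ = _
        rw [pow_succ']
        set z := ss i * ss j with hz
        group
      · show (∏ l ∈ Finset.range (2 * k),
            (if (ss i * ss j) * t * (ss i * ss j)⁻¹ = (ss j * ss i) ^ l * ss j
              then (-1 : ℤˣ) else 1)) * _ = _
        have hre : ∀ l : ℕ,
            ((ss i * ss j) * t * (ss i * ss j)⁻¹ = (ss j * ss i) ^ l * ss j)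
            ↔ (t = (ss j * ss i) ^ (l + 2) * ss j) := by
          intro l
          rw [conj_eq_iff, key2]
        have hprod : (∏ l ∈ Finset.range (2 * k),
            (if (ss i * ss j) * t * (ss i * ss j)⁻¹ = (ss j * ss i) ^ l * ss j
              then (-1 : ℤˣ) else 1)) =
            ∏ l ∈ Finset.range (2 * k),
              (if t = (ss j * ss i) ^ (l + 2) * ss j then (-1 : ℤˣ) else 1) := by
          refine Finset.prod_congr rfl fun l _ => by rw [hre]
        rw [hprod]
        have h2k : 2 * (k + 1) = (2 * k + 1) + 1 := by ring
        rw [h2k, Finset.prod_range_succ', Finset.prod_range_succ']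
        simp only [pow_zero, one_mul]
        have : ∀ l : ℕ, l + 1 + 1 = l + 2 := fun l => by ring
        simp only [this]
        simp [mul_assoc]

lemma eta_liftable : M.IsLiftable (eta cs) := by
  intro i j
  rcases Nat.eq_zero_or_pos (M i j) with h0 | hpos
  · rw [h0, pow_zero]
  · refine Equiv.ext fun p => ?_
    obtain ⟨t, e⟩ := p
    rw [eta_pow_apply, Equiv.Perm.one_apply]
    have h1 : (ss i * ss j) ^ M i j = 1 := cs.simple_mul_simple_pow i j
    have h2 : (ss j * ss i) ^ M i j = 1 := cs.simple_mul_simple_pow' i j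
    refine Prod.ext ?_ ?_
    · show (ss i * ss j) ^ M i j * t * ((ss i * ss j) ^ M i j)⁻¹ = t
      rw [h1]; group
    · show (∏ l ∈ Finset.range (2 * M i j),
          (if t = (ss j * ss i) ^ l * ss j then (-1 : ℤˣ) else 1)) * e = e
      have : (∏ l ∈ Finset.range (2 * M i j),
          (if t = (ss j * ss i) ^ l * ss j then (-1 : ℤˣ) else 1)) = 1 := by
        rw [two_mul, Finset.prod_range_add]
        have : ∀ l : ℕ, (ss j * ss i) ^ (M i j + l) = (ss j * ss i) ^ l := by
          intro l; rw [pow_add, h2, one_mul]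
        simp only [this]
        exact Int.units_mul_self _
      rw [this, one_mul]

/-- The sign homomorphism. -/
def phi : W →* Equiv.Perm (W × ℤˣ) := cs.lift ⟨eta cs, eta_liftable cs⟩

lemma phi_simple (i : B) : phi cs (ss i) = eta cs i := cs.lift_apply_simple (eta_liftable cs) i

/-- The sign of `t` relative to a list of reflections. -/
def lsgn (t : W) (l : List W) : ℤˣ := (l.map (fun x => if t = x then (-1 : ℤˣ) else 1)).prod

@[simp] lemma lsgn_nil (t : W) : lsgn t [] = 1 := rfl

lemma lsgn_cons (t x : W) (l : List W) :
    lsgn t (x :: l) = (if t = x then (-1 : ℤˣ) else 1) * lsgn t l := by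
  simp [lsgn]

lemma lsgn_eq_one_of_not_mem {t : W} {l : List W} (h : t ∉ l) : lsgn t l = 1 := by
  induction l with
  | nil => rfl
  | cons x l ih =>
      rw [lsgn_cons, if_neg (fun hc => h (by rw [hc]; exact List.mem_cons_self)),
        ih (fun hc => h (List.mem_cons_of_mem _ hc)), one_mul]

lemma phi_wordProd (ω : List B) (t : W) (e : ℤˣ) :
    phi cs (π ω) (t, e) = ((π ω) * t * (π ω)⁻¹, lsgn t (cs.rightInvSeq ω) * e) := by
  induction ω generalizing t e with
  | nil => simp [lsgn]
  | cons i ω ih =>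
      rw [cs.wordProd_cons, map_mul, Equiv.Perm.mul_apply, ih, phi_simple, eta_apply]
      have hris : cs.rightInvSeq (i :: ω) = (π ω)⁻¹ * ss i * (π ω) :: cs.rightInvSeq ω := rfl
      refine Prod.ext ?_ ?_
      · show ss i * ((π ω) * t * (π ω)⁻¹) * (ss i)⁻¹ = _
        rw [mul_inv_rev]
        group
      · show (if (π ω) * t * (π ω)⁻¹ = ss i then (-1 : ℤˣ) else 1) *
            (lsgn t (cs.rightInvSeq ω) * e) = _
        rw [hris, lsgn_cons]
        have : ((π ω) * t * (π ω)⁻¹ = ss i) ↔ (t = (π ω)⁻¹ * ss i * (π ω)) := by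
          rw [conj_eq_iff, mul_assoc]
        rw [← mul_assoc]
        congr 2
        rw [this]

lemma lsgn_ris_eq_of_wordProd_eq {ω ω' : List B} (h : π ω = π ω') (t : W) :
    lsgn t (cs.rightInvSeq ω) = lsgn t (cs.rightInvSeq ω') := by
  have h1 := phi_wordProd cs ω t 1
  have h2 := phi_wordProd cs ω' t 1
  rw [h] at h1
  have h3 := congrArg Prod.snd (h1.symm.trans h2)
  simpa using h3

/-- The (simple) exchange condition, via membership in the right inversion sequence. -/
lemma simple_mem_rightInvSeq_of_descent {ω : List B} (hω : cs.IsReduced ω) {i : B}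
    (h : ℓ (π ω * ss i) < ℓ (π ω)) : ss i ∈ cs.rightInvSeq ω := by
  obtain ⟨ω', hred', hw'⟩ := cs.exists_reduced_word' (π ω * ss i)
  have hπ : π (ω'.concat i) = π ω := by
    rw [cs.wordProd_concat, ← hw', mul_assoc, cs.simple_mul_simple_self, mul_one]
  by_contra hmem
  have h1 : lsgn (ss i) (cs.rightInvSeq ω) = 1 := lsgn_eq_one_of_not_mem hmem
  have hmem' : ss i ∉ cs.rightInvSeq ω' := by
    intro hc
    have := cs.isRightInversion_of_mem_rightInvSeq hred' hc
    rw [← hw'] at this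
    have h3 : ℓ (π ω * ss i * ss i) < ℓ (π ω * ss i) := this.2
    rw [mul_assoc, cs.simple_mul_simple_self, mul_one] at h3
    omega
  have h2 : lsgn (ss i) (cs.rightInvSeq (ω'.concat i)) = -1 := by
    rw [cs.rightInvSeq_concat]
    unfold lsgn
    rw [List.concat_eq_append, List.map_append, List.prod_append]
    have hmap : lsgn (ss i) (List.map (MulAut.conj (ss i)) (cs.rightInvSeq ω')) = 1 := by
      apply lsgn_eq_one_of_not_mem
      intro hc
      obtain ⟨x, hx, hxc⟩ := List.mem_map.mp hc
      apply hmem'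
      have : x = ss i := by
        have : (MulAut.conj (ss i)) x = ss i := hxc
        have h5 : ss i * x * (ss i)⁻¹ = ss i := this
        rw [conj_eq_iff] at h5
        rw [h5]; group
      rwa [← this]
    have : (List.map (fun x => if ss i = x then (-1 : ℤˣ) else 1)
        (List.map (MulAut.conj (ss i)) (cs.rightInvSeq ω'))).prod = 1 := hmap
    rw [this, one_mul]
    simp
  have := lsgn_ris_eq_of_wordProd_eq cs hπ.symm (ss i)
  rw [h1, h2] at this
  exact absurd this (by decide)

/-- The exchange condition. -/
lemma exchange {ω : List B} (hω : cs.IsReduced ω) {i : B}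
    (h : ℓ (π ω * ss i) < ℓ (π ω)) :
    ∃ j, j < ω.length ∧ π ω * ss i = π (ω.eraseIdx j) := by
  have hmem := simple_mem_rightInvSeq_of_descent cs hω h
  obtain ⟨j, hj, hget⟩ := List.mem_iff_getElem.mp hmem
  refine ⟨j, by simpa using hj, ?_⟩
  have := cs.wordProd_mul_getD_rightInvSeq ω j
  rw [List.getD_eq_getElem _ _ hj, hget] at this
  exact this



/-- `W_J`. -/
def WJ (J : Set B) : Subgroup W := Subgroup.closure (cs.simple '' J)

lemma simple_mem_WJ {J : Set B} {i : B} (hi : i ∈ J) : ss i ∈ WJ cs J :=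
  Subgroup.subset_closure ⟨i, hi, rfl⟩

lemma WJ_mono {J J' : Set B} (h : J ⊆ J') : WJ cs J ≤ WJ cs J' :=
  Subgroup.closure_mono (Set.image_mono h)

lemma wordProd_mem_WJ {J : Set B} {ω : List B} (h : ∀ i ∈ ω, i ∈ J) : π ω ∈ WJ cs J := by
  induction ω with
  | nil => simpa using (WJ cs J).one_mem
  | cons i ω ih =>
      rw [cs.wordProd_cons]
      exact mul_mem (simple_mem_WJ cs (h i List.mem_cons_self))
        (ih fun j hj => h j (List.mem_cons_of_mem _ hj))

/-- Every word with letters in `J` can be replaced by a reduced word with letters in `J`. -/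
lemma exists_reduced_subword {J : Set B} (ω : List B) (h : ∀ i ∈ ω, i ∈ J) :
    ∃ ν : List B, (∀ i ∈ ν, i ∈ J) ∧ cs.IsReduced ν ∧ π ν = π ω := by
  induction ω using List.reverseRecOn with
  | nil => exact ⟨[], by simp, by simp [CoxeterSystem.IsReduced], rfl⟩
  | append_singleton ω i ih =>
      obtain ⟨ν₁, hν₁J, hν₁red, hν₁π⟩ := ih (fun j hj => h j (by simp [hj]))
      have hiJ : i ∈ J := h i (by simp)
      rcases cs.length_mul_simple (π ν₁) i with hup | hdown
      · refine ⟨ν₁ ++ [i], ?_, ?_, ?_⟩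
        · intro j hj
          rcases List.mem_append.mp hj with hj | hj
          · exact hν₁J j hj
          · simp at hj; subst hj; exact hiJ
        · unfold CoxeterSystem.IsReduced at *
          rw [cs.wordProd_append, cs.wordProd_singleton, hup, List.length_append,
            List.length_singleton, hν₁red]
        · rw [cs.wordProd_append, cs.wordProd_singleton, hν₁π, cs.wordProd_append,
            cs.wordProd_singleton]
      · have hlt : ℓ (π ν₁ * ss i) < ℓ (π ν₁) := by omega
        obtain ⟨j, hj, heq⟩ := exchange cs hν₁red hlt
        refine ⟨ν₁.eraseIdx j, ?_, ?_, ?_⟩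
        · intro x hx
          exact hν₁J x ((List.eraseIdx_sublist ν₁ j).subset hx)
        · unfold CoxeterSystem.IsReduced at *
          rw [← heq]
          have h1 : (ν₁.eraseIdx j).length = ν₁.length - 1 := by
            rw [List.length_eraseIdx]
            simp [hj]
          have h2 : ℓ (π ν₁ * ss i) ≤ (ν₁.eraseIdx j).length := by
            rw [heq]; exact cs.length_wordProd_le _
          omega
        · rw [← heq, cs.wordProd_append, cs.wordProd_singleton, hν₁π]

lemma exists_reduced_word_WJ {J : Set B} {w : W} (hw : w ∈ WJ cs J) :
    ∃ ω : List B, (∀ i ∈ ω, i ∈ J) ∧ cs.IsReduced ω ∧ w = π ω := by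
  have : ∃ ω : List B, (∀ i ∈ ω, i ∈ J) ∧ w = π ω := by
    induction hw using Subgroup.closure_induction with
    | mem x hx =>
        obtain ⟨i, hi, rfl⟩ := hx
        exact ⟨[i], by simpa using hi, (cs.wordProd_singleton i).symm⟩
    | one => exact ⟨[], by simp, by simp⟩
    | mul x y hx hy ihx ihy =>
        obtain ⟨ω₁, h1, rfl⟩ := ihx
        obtain ⟨ω₂, h2, rfl⟩ := ihy
        exact ⟨ω₁ ++ ω₂, fun i hi => (List.mem_append.mp hi).elim (h1 i) (h2 i),
          (cs.wordProd_append ω₁ ω₂).symm⟩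
    | inv x hx ihx =>
        obtain ⟨ω₁, h1, rfl⟩ := ihx
        exact ⟨ω₁.reverse, fun i hi => h1 i (List.mem_reverse.mp hi),
          (cs.wordProd_reverse ω₁).symm⟩
  obtain ⟨ω, hωJ, rfl⟩ := this
  obtain ⟨ν, h1, h2, h3⟩ := exists_reduced_subword cs ω hωJ
  exact ⟨ν, h1, h2, h3.symm⟩

/-- A nontrivial element of `W_J` has a right descent in `J`, staying in `W_J`. -/
lemma exists_right_descent_WJ {J : Set B} {w : W} (hw : w ∈ WJ cs J) (hne : w ≠ 1) :
    ∃ i ∈ J, ∃ w', w' ∈ WJ cs J ∧ w = w' * ss i ∧ ℓ w = ℓ w' + 1 := by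
  obtain ⟨ω, hωJ, hred, rfl⟩ := exists_reduced_word_WJ cs hw
  rcases List.eq_nil_or_concat' ω with rfl | ⟨ω₁, i, rfl⟩
  · simp at hne
  · refine ⟨i, hωJ i (by simp), π ω₁, wordProd_mem_WJ cs (fun j hj => hωJ j (by simp [hj])),
      by rw [cs.wordProd_append, cs.wordProd_singleton], ?_⟩
    have hred₁ : cs.IsReduced ω₁ := by
      have := hred.take ω₁.length
      rwa [List.take_left] at this
    unfold CoxeterSystem.IsReduced at hred hred₁
    rw [hred, hred₁, List.length_append, List.length_singleton]

/-- Deodhar: a minimal length element of a coset `u W_J` is length-additive. -/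
lemma min_coset_additive {J : Set B} {u : W} (hmin : ∀ v ∈ WJ cs J, ℓ u ≤ ℓ (u * v)) :
    ∀ v ∈ WJ cs J, ℓ (u * v) = ℓ u + ℓ v := by
  suffices H : ∀ n, ∀ v ∈ WJ cs J, ℓ v = n → ℓ (u * v) = ℓ u + ℓ v by
    exact fun v hv => H (ℓ v) v hv rfl
  intro n
  induction n using Nat.strong_induction_on with
  | _ n ih =>
      intro v hv hn
      by_cases hone : v = 1
      · simp [hone]
      · obtain ⟨i, hi, w', hw', rfl, hlen⟩ := exists_right_descent_WJ cs hv hone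
        have hw'lt : ℓ w' < n := by omega
        have ihw : ℓ (u * w') = ℓ u + ℓ w' := ih (ℓ w') hw'lt w' hw' rfl
        rcases cs.length_mul_simple (u * w') i with hup | hdown
        · rw [← mul_assoc, hup, ihw, hlen]; omega
        · exfalso
          have hlt : ℓ (u * w' * ss i) < ℓ (u * w') := by omega
          obtain ⟨μ, hμred, hμ⟩ := cs.exists_reduced_word' u
          obtain ⟨κ, hκJ, hκred, hκ⟩ := exists_reduced_word_WJ cs hw'
          have hcatπ : π (μ ++ κ) = u * w' := by
            rw [cs.wordProd_append, ← hμ, ← hκ]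
          have hcatred : cs.IsReduced (μ ++ κ) := by
            unfold CoxeterSystem.IsReduced at *
            rw [hcatπ, ihw, List.length_append, hμ, hκ, hμred, hκred]
          have hlt2 : ℓ (π (μ ++ κ) * ss i) < ℓ (π (μ ++ κ)) := by rw [hcatπ]; exact hlt
          obtain ⟨r, hr, heq⟩ := exchange cs hcatred hlt2
          rw [hcatπ] at heq
          by_cases hcase : r < μ.length
          · rw [List.eraseIdx_append_of_lt_length hcase, cs.wordProd_append, ← hκ] at heq
            set z := w' * ss i * w'⁻¹ with hz
            have hzmem : z ∈ WJ cs J :=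
              mul_mem (mul_mem hw' (simple_mem_WJ cs hi)) (inv_mem hw')
            have huz : u * z = π (μ.eraseIdx r) := by
              rw [hz]
              have : u * (w' * ss i * w'⁻¹) * w' = u * w' * ss i := by group
              have h2 := heq
              calc u * (w' * ss i * w'⁻¹) = (u * w' * ss i) * w'⁻¹ := by group
                _ = (π (μ.eraseIdx r) * w') * w'⁻¹ := by rw [h2]
                _ = π (μ.eraseIdx r) := by group
            have h3 : ℓ (u * z) ≤ (μ.eraseIdx r).length := by
              rw [huz]; exact cs.length_wordProd_le _
            have h4 : (μ.eraseIdx r).length = μ.length - 1 := by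
              rw [List.length_eraseIdx]; simp [hcase]
            have h5 : μ.length = ℓ u := by rw [← hμred, hμ]
            have h6 := hmin z hzmem
            omega
          · push_neg at hcase
            rw [List.eraseIdx_append_of_length_le hcase, cs.wordProd_append, ← hμ] at heq
            have h2 : w' * ss i = π (κ.eraseIdx (r - μ.length)) :=
              mul_left_cancel (by rw [← mul_assoc]; exact heq)
            have h3 : ℓ (w' * ss i) ≤ (κ.eraseIdx (r - μ.length)).length := by
              rw [h2]; exact cs.length_wordProd_le _
            have hrlt : r - μ.length < κ.length := by
              have : (μ ++ κ).length = μ.length + κ.length := List.length_append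
              omega
            have h4 : (κ.eraseIdx (r - μ.length)).length = κ.length - 1 := by
              rw [List.length_eraseIdx]; simp [hrlt]
            have h5 : κ.length = ℓ w' := by rw [← hκred, hκ]
            omega

/-- An element with no right descent in `J` is length-additive on `W_J`. -/
lemma no_descent_additive {J : Set B} {z : W} (h : ∀ i ∈ J, ℓ z < ℓ (z * ss i)) :
    ∀ v ∈ WJ cs J, ℓ (z * v) = ℓ z + ℓ v := by
  have hne : Set.Nonempty {n | ∃ v ∈ WJ cs J, ℓ (z * v) = n} := ⟨ℓ z, 1, one_mem _, by simp⟩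
  obtain ⟨v₀, hv₀, hn₀⟩ := Nat.sInf_mem hne
  have hpmin : ∀ v ∈ WJ cs J, ℓ (z * v₀) ≤ ℓ (z * v) := by
    intro v hv
    rw [hn₀]
    exact Nat.sInf_le ⟨v, hv, rfl⟩
  have hadd : ∀ v ∈ WJ cs J, ℓ (z * v₀ * v) = ℓ (z * v₀) + ℓ v := by
    apply min_coset_additive cs
    intro v hv
    rw [mul_assoc]
    exact hpmin _ (mul_mem hv₀ hv)
  have hv₀one : v₀ = 1 := by
    by_contra hne'
    have hinvne : v₀⁻¹ ≠ 1 := fun hc => hne' (by simpa using congrArg (·⁻¹) hc)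
    obtain ⟨i, hi, v₂, hv₂, hv₀eq, hlen⟩ := exists_right_descent_WJ cs (inv_mem hv₀) hinvne
    have h1 : ℓ z = ℓ (z * v₀) + ℓ v₀⁻¹ := by
      have := hadd v₀⁻¹ (inv_mem hv₀)
      rwa [mul_assoc, mul_inv_cancel, mul_one] at this
    have h2 : z * ss i = z * v₀ * v₂ := by
      have hv₀' : v₀ = ss i * v₂⁻¹ := by
        have : v₀ = (v₂ * ss i)⁻¹ := by rw [← hv₀eq]; group
        rw [this, mul_inv_rev, cs.inv_simple]
      rw [hv₀']
      group
    have h3 : ℓ (z * ss i) = ℓ (z * v₀) + ℓ v₂ := by rw [h2]; exact hadd v₂ hv₂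
    have h4 := h i hi
    omega
  intro v hv
  have := hadd v hv
  rwa [hv₀one, mul_one] at this

/-- The set `K₁` of letters of `K` which `w₁` conjugates into `W_J`. -/
def Kone (K J : Set B) (w₁ : W) : Set B := {k ∈ K | w₁⁻¹ * ss k * w₁ ∈ WJ cs J}

lemma Kone_subset (K J : Set B) (w₁ : W) : Kone cs K J w₁ ⊆ K := fun k hk => hk.1

lemma simple_of_length_one {J : Set B} {w : W} (hw : w ∈ WJ cs J) (h : ℓ w = 1) :
    ∃ j ∈ J, w = ss j := by
  obtain ⟨ω, hωJ, hred, rfl⟩ := exists_reduced_word_WJ cs hw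
  unfold CoxeterSystem.IsReduced at hred
  rw [h] at hred
  obtain ⟨a, rfl⟩ := List.length_eq_one_iff.mp hred.symm
  exact ⟨a, hωJ a (by simp), cs.wordProd_singleton a⟩

section TwoSided

variable {J K : Set B} {w₁ : W}
variable (hJadd : ∀ v ∈ WJ cs J, cs.length (w₁ * v) = cs.length w₁ + cs.length v)
variable (hKadd : ∀ u ∈ WJ cs K, cs.length (u * w₁) = cs.length u + cs.length w₁)

include hJadd hKadd in
lemma conj_simple_Kone {k : B} (hk : k ∈ Kone cs K J w₁) :
    ∃ j, j ∈ Kone cs J K w₁⁻¹ ∧ w₁⁻¹ * ss k * w₁ = ss j := by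
  have htJ : w₁⁻¹ * ss k * w₁ ∈ WJ cs J := hk.2
  have htlen : ℓ (w₁⁻¹ * ss k * w₁) = 1 := by
    have h1 := hJadd _ htJ
    have h2 : w₁ * (w₁⁻¹ * ss k * w₁) = ss k * w₁ := by group
    have h3 : ℓ (ss k * w₁) = ℓ (ss k) + ℓ w₁ := hKadd _ (simple_mem_WJ cs hk.1)
    rw [h2, h3, cs.length_simple] at h1
    omega
  obtain ⟨j, hj, hjeq⟩ := simple_of_length_one cs htJ htlen
  refine ⟨j, ⟨hj, ?_⟩, hjeq⟩
  have hc : (w₁⁻¹)⁻¹ * ss j * w₁⁻¹ = ss k := by rw [← hjeq]; group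
  rw [hc]
  exact simple_mem_WJ cs hk.1

include hJadd hKadd in
lemma conj_mem_Wone {a : W} (ha : a ∈ WJ cs (Kone cs K J w₁)) :
    w₁⁻¹ * a * w₁ ∈ WJ cs (Kone cs J K w₁⁻¹) := by
  induction ha using Subgroup.closure_induction with
  | mem x hx =>
      obtain ⟨k, hk, rfl⟩ := hx
      obtain ⟨j, hj, hjeq⟩ := conj_simple_Kone cs hJadd hKadd hk
      rw [hjeq]
      exact simple_mem_WJ cs hj
  | one => simpa using (WJ cs _).one_mem
  | mul x y hx hy ihx ihy =>
      have : w₁⁻¹ * (x * y) * w₁ = (w₁⁻¹ * x * w₁) * (w₁⁻¹ * y * w₁) := by group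
      rw [this]
      exact mul_mem ihx ihy
  | inv x hx ihx =>
      have : w₁⁻¹ * x⁻¹ * w₁ = (w₁⁻¹ * x * w₁)⁻¹ := by group
      rw [this]
      exact inv_mem ihx

include hJadd hKadd in
/-- Kilmoyer-type additivity: a `W_{K₁}`-minimal element `u'` of `W_K` gives a
`W_J`-minimal element `u' * w₁`. -/
lemma kil {u' : W} (hu'K : u' ∈ WJ cs K)
    (hmin : ∀ b ∈ WJ cs (Kone cs K J w₁), ℓ u' ≤ ℓ (u' * b)) :
    ∀ v ∈ WJ cs J, ℓ (u' * w₁ * v) = ℓ u' + ℓ w₁ + ℓ v := by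
  have hlen : ℓ (u' * w₁) = ℓ u' + ℓ w₁ := hKadd u' hu'K
  have hnodesc : ∀ j ∈ J, ℓ (u' * w₁) < ℓ (u' * w₁ * ss j) := by
    intro j hj
    by_contra hcon
    push_neg at hcon
    have hlt : ℓ (u' * w₁ * ss j) < ℓ (u' * w₁) := by
      rcases cs.length_mul_simple (u' * w₁) j with hup | hdown
      · omega
      · omega
    obtain ⟨μ, hμJ, hμred, hμ⟩ := exists_reduced_word_WJ cs hu'K
    obtain ⟨κ, hκred, hκ⟩ := cs.exists_reduced_word' w₁
    have hcatπ : π (μ ++ κ) = u' * w₁ := by rw [cs.wordProd_append, ← hμ, ← hκ]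
    have hcatred : cs.IsReduced (μ ++ κ) := by
      unfold CoxeterSystem.IsReduced at *
      rw [hcatπ, hlen, List.length_append, hμ, hκ, hμred, hκred]
    have hlt2 : ℓ (π (μ ++ κ) * ss j) < ℓ (π (μ ++ κ)) := by rw [hcatπ]; exact hlt
    obtain ⟨r, hr, heq⟩ := exchange cs hcatred hlt2
    rw [hcatπ] at heq
    by_cases hcase : r < μ.length
    · rw [List.eraseIdx_append_of_lt_length hcase, cs.wordProd_append, ← hκ] at heq
      set t := w₁ * ss j * w₁⁻¹ with htdef
      have htK : t ∈ WJ cs K := by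
        have hμer : π (μ.eraseIdx r) ∈ WJ cs K :=
          wordProd_mem_WJ cs (fun x hx => hμJ x ((List.eraseIdx_sublist μ r).subset hx))
        have : t = u'⁻¹ * (π (μ.eraseIdx r)) := by
          rw [htdef]
          have : π (μ.eraseIdx r) = u' * w₁ * ss j * w₁⁻¹ := by rw [heq]; group
          rw [this]
          group
        rw [this]
        exact mul_mem (inv_mem hu'K) hμer
      have htlen : ℓ t = 1 := by
        have h1 : ℓ (t * w₁) = ℓ t + ℓ w₁ := hKadd t htK
        have h2 : t * w₁ = w₁ * ss j := by rw [htdef]; group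
        have h3 : ℓ (w₁ * ss j) = ℓ w₁ + 1 := by
          have := hJadd (ss j) (simple_mem_WJ cs hj)
          rwa [cs.length_simple] at this
        rw [h2, h3] at h1
        omega
      obtain ⟨k, hkK, hkeq⟩ := simple_of_length_one cs htK htlen
      have hkone : k ∈ Kone cs K J w₁ := by
        refine ⟨hkK, ?_⟩
        have : w₁⁻¹ * ss k * w₁ = ss j := by
          rw [← hkeq, htdef]; group
        rw [this]
        exact simple_mem_WJ cs hj
      have hu's : u' * ss k = π (μ.eraseIdx r) := by
        rw [← hkeq, htdef]
        have : π (μ.eraseIdx r) = u' * w₁ * ss j * w₁⁻¹ := by rw [heq]; group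
        rw [this]
        group
      have h3 : ℓ (u' * ss k) ≤ (μ.eraseIdx r).length := by
        rw [hu's]; exact cs.length_wordProd_le _
      have h4 : (μ.eraseIdx r).length = μ.length - 1 := by
        rw [List.length_eraseIdx]; simp [hcase]
      have h5 : μ.length = ℓ u' := by rw [hμ]; exact hμred.symm
      have h6 := hmin (ss k) (simple_mem_WJ cs hkone)
      omega
    · push_neg at hcase
      rw [List.eraseIdx_append_of_length_le hcase, cs.wordProd_append, ← hμ] at heq
      have h2 : w₁ * ss j = π (κ.eraseIdx (r - μ.length)) :=
        mul_left_cancel (by rw [← mul_assoc]; exact heq)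
      have h3 : ℓ (w₁ * ss j) ≤ (κ.eraseIdx (r - μ.length)).length := by
        rw [h2]; exact cs.length_wordProd_le _
      have hrlt : r - μ.length < κ.length := by
        have : (μ ++ κ).length = μ.length + κ.length := List.length_append
        omega
      have h4 : (κ.eraseIdx (r - μ.length)).length = κ.length - 1 := by
        rw [List.length_eraseIdx]; simp [hrlt]
      have h5 : κ.length = ℓ w₁ := by rw [hκ]; exact hκred.symm
      have h6 : ℓ (w₁ * ss j) = ℓ w₁ + 1 := by
        have := hJadd (ss j) (simple_mem_WJ cs hj)
        rwa [cs.length_simple] at this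
      omega
  intro v hv
  rw [no_descent_additive cs hnodesc v hv, hlen]

end TwoSided


section BuildingLemmas

open RAB

variable {B W C : Type*} [Group W] {M : CoxeterMatrix B}
variable {cs : CoxeterSystem M W} (X : RAB.Building cs C)

local prefix:100 "ss" => cs.simple
local prefix:100 "π" => cs.wordProd
local prefix:100 "ℓ" => cs.length

lemma delta_self (x : C) : X.δ x x = 1 := (X.delta_eq_one_iff x x).mpr rfl

lemma eq_of_delta_eq_one {x y : C} (h : X.δ x y = 1) : x = y :=
  (X.delta_eq_one_iff x y).mp h

lemma simple_ne_one (i : B) : ss i ≠ (1 : W) := by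
  intro h
  have := cs.length_simple i
  rw [h, cs.length_one] at this
  omega

lemma panel_symm {x y : C} {i : B} (h : X.δ x y = ss i) : X.δ y x = ss i := by
  rcases X.delta_mem_pair y x y i h with h1 | h1
  · rw [delta_self] at h1
    exfalso
    have hxy : y = x := eq_of_delta_eq_one X h1.symm
    subst hxy
    rw [delta_self] at h
    exact simple_ne_one (cs := cs) i h.symm
  · rw [delta_self] at h1
    have h2 : X.δ y x = (ss i)⁻¹ := mul_eq_one_iff_eq_inv.mp h1.symm
    rw [h2, cs.inv_simple]

lemma delta_mul {x y z : C} {w₁ w₂ : W} (h1 : X.δ x y = w₁) (h2 : X.δ y z = w₂)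
    (hl : ℓ (w₁ * w₂) = ℓ w₁ + ℓ w₂) : X.δ x z = w₁ * w₂ := by
  suffices H : ∀ n : ℕ, ∀ (w₁ w₂ : W) (x y z : C), ℓ w₂ = n → X.δ x y = w₁ → X.δ y z = w₂ →
      ℓ (w₁ * w₂) = ℓ w₁ + ℓ w₂ → X.δ x z = w₁ * w₂ by
    exact H (ℓ w₂) w₁ w₂ x y z rfl h1 h2 hl
  intro n
  induction n using Nat.strong_induction_on with
  | _ n ih =>
      intro w₁ w₂ x y z hn h1 h2 hl
      by_cases hone : w₂ = 1
      · subst hone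
        have hyz : y = z := eq_of_delta_eq_one X h2
        subst hyz
        rw [mul_one]
        exact h1
      · obtain ⟨i, hdesc⟩ := cs.exists_rightDescent_of_ne_one hone
        have hdesc' : ℓ (w₂ * ss i) < ℓ w₂ := hdesc
        have hlen2 : ℓ (w₂ * ss i) + 1 = ℓ w₂ := by
          rcases cs.length_mul_simple w₂ i with hc | hc
          · omega
          · omega
        obtain ⟨z₂, hz₂1, hz₂2⟩ := X.exists_delta y z i
        rw [h2] at hz₂2
        have hup : w₂ * ss i * ss i = w₂ := cs.simple_mul_simple_cancel_right i
        have hxz₂s : w₁ * (w₂ * ss i) * ss i = w₁ * w₂ := by rw [mul_assoc, hup]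
        have hl' : ℓ (w₁ * (w₂ * ss i)) = ℓ w₁ + ℓ (w₂ * ss i) := by
          have hle : ℓ (w₁ * (w₂ * ss i)) ≤ ℓ w₁ + ℓ (w₂ * ss i) := cs.length_mul_le _ _
          have hge : ℓ (w₁ * w₂) ≤ ℓ (w₁ * (w₂ * ss i)) + 1 := by
            rw [← hxz₂s]
            have := cs.length_mul_le (w₁ * (w₂ * ss i)) (ss i)
            rwa [cs.length_simple] at this
          omega
        have ihz : X.δ x z₂ = w₁ * (w₂ * ss i) :=
          ih (ℓ (w₂ * ss i)) (by omega) w₁ (w₂ * ss i) x y z₂ rfl h1 hz₂2 hl'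
        have hz₂z : X.δ z₂ z = ss i := panel_symm X hz₂1
        have hlen3 : ℓ (X.δ x z₂ * ss i) = ℓ (X.δ x z₂) + 1 := by
          rw [ihz, hxz₂s, hl, hl']
          omega
        have hfin := X.delta_eq_of_length x z₂ z i hz₂z hlen3
        rw [hfin, ihz, hxz₂s]

lemma delta_inv (x y : C) : X.δ y x = (X.δ x y)⁻¹ := by
  suffices H : ∀ n : ℕ, ∀ x y : C, ℓ (X.δ x y) = n → X.δ y x = (X.δ x y)⁻¹ by
    exact H (ℓ (X.δ x y)) x y rfl
  intro n
  induction n using Nat.strong_induction_on with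
  | _ n ih =>
      intro x y hn
      by_cases hone : X.δ x y = 1
      · have hxy : x = y := eq_of_delta_eq_one X hone
        subst hxy
        rw [delta_self, inv_one]
      · obtain ⟨i, hdesc⟩ := cs.exists_rightDescent_of_ne_one hone
        have hdesc' : ℓ (X.δ x y * ss i) < ℓ (X.δ x y) := hdesc
        obtain ⟨z, hz1, hz2⟩ := X.exists_delta x y i
        have ihz : X.δ z x = (X.δ x z)⁻¹ := by
          refine ih (ℓ (X.δ x z)) ?_ x z rfl
          rw [hz2]
          omega
        have key : ss i * (X.δ x z)⁻¹ = (X.δ x y)⁻¹ := by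
          rw [hz2, mul_inv_rev, cs.inv_simple, cs.simple_mul_simple_cancel_left]
        have hlenz : ℓ (X.δ x z) + 1 = ℓ (X.δ x y) := by
          rcases cs.length_mul_simple (X.δ x y) i with hc | hc
          · omega
          · rw [hz2]; omega
        have hmul : X.δ y x = ss i * (X.δ x z)⁻¹ := by
          refine delta_mul X hz1 ihz ?_
          rw [key, cs.length_inv, cs.length_simple, cs.length_inv]
          omega
        rw [hmul, key]

lemma dist_symm (x y : C) : X.dist x y = X.dist y x := by
  unfold RAB.Building.dist
  rw [delta_inv X x y, cs.length_inv]

lemma mem_res_iff {J : Set B} {c x : C} : x ∈ X.Res J c ↔ X.δ c x ∈ WJ cs J := Iff.rfl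

lemma self_mem_res {J : Set B} (c : C) : c ∈ X.Res J c := by
  rw [mem_res_iff, delta_self]
  exact one_mem _

lemma res_mono {J J' : Set B} (h : J ⊆ J') (c : C) : X.Res J c ⊆ X.Res J' c :=
  fun x hx => WJ_mono cs h hx

/-- Walking along a word from `b`, with base point `x` for the Weyl distance. -/
lemma walkx (x b : C) (ω : List B) :
    ∃ y : C, X.δ x y = X.δ x b * π ω ∧
      ∀ (c : C) (J : Set B), (∀ i ∈ ω, i ∈ J) → X.δ c b ∈ WJ cs J → X.δ c y ∈ WJ cs J := by
  induction ω using List.reverseRecOn with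
  | nil => exact ⟨b, by simp, fun c J _ h => h⟩
  | append_singleton ω i ih =>
      obtain ⟨y', hy'1, hy'2⟩ := ih
      obtain ⟨y, h1, h2⟩ := X.exists_delta x y' i
      refine ⟨y, ?_, ?_⟩
      · rw [h2, hy'1, cs.wordProd_append, cs.wordProd_singleton, mul_assoc]
      · intro c J hJ hb
        have hy' : X.δ c y' ∈ WJ cs J := hy'2 c J (fun j hj => hJ j (by simp [hj])) hb
        have hiJ : i ∈ J := hJ i (by simp)
        rcases X.delta_mem_pair c y' y i h1 with hc | hc
        · rw [hc]; exact hy'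
        · rw [hc]; exact mul_mem hy' (simple_mem_WJ cs hiJ)

/-- Chambers reachable by a `J`-gallery stay in the residue. -/
lemma res_closed {J : Set B} : ∀ (n : ℕ) (w : W) (c y z : C), ℓ w = n → w ∈ WJ cs J →
    X.δ y z = w → X.δ c y ∈ WJ cs J → X.δ c z ∈ WJ cs J := by
  intro n
  induction n using Nat.strong_induction_on with
  | _ n ih =>
      intro w c y z hn hw hyz hcy
      by_cases hone : w = 1
      · subst hone
        have := eq_of_delta_eq_one X hyz
        subst this
        exact hcy
      · obtain ⟨i, hiJ, w', hw', hweq, hlen⟩ := exists_right_descent_WJ cs hw hone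
        obtain ⟨z₁, hz₁1, hz₁2⟩ := X.exists_delta y z i
        have hyz₁ : X.δ y z₁ = w' := by
          rw [hz₁2, hyz, hweq, cs.simple_mul_simple_cancel_right]
        have hcz₁ : X.δ c z₁ ∈ WJ cs J :=
          ih (ℓ w') (by omega) w' c y z₁ rfl hw' hyz₁ hcy
        have hz₁z : X.δ z₁ z = ss i := panel_symm X hz₁1
        rcases X.delta_mem_pair c z₁ z i hz₁z with hc | hc
        · rw [hc]; exact hcz₁
        · rw [hc]; exact mul_mem hcz₁ (simple_mem_WJ cs hiJ)

lemma res_delta_mem {J : Set B} {c y z : C} (hy : y ∈ X.Res J c) (hz : z ∈ X.Res J c) :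
    X.δ y z ∈ WJ cs J := by
  have hyc : X.δ y c ∈ WJ cs J := by
    rw [delta_inv X c y]
    exact inv_mem hy
  exact res_closed X (ℓ (X.δ c z)) (X.δ c z) y c z rfl hz rfl hyc

lemma res_eq {J : Set B} {c y : C} (hy : y ∈ X.Res J c) : X.Res J c = X.Res J y := by
  ext z
  constructor
  · intro hz
    exact res_delta_mem X hy hz
  · intro hz
    exact res_closed X (ℓ (X.δ y z)) (X.δ y z) c y z rfl hz rfl hy

/-- The gate property of residues. -/
lemma gate (J : Set B) (c x : C) :
    ∃ p ∈ X.Res J c, ∀ y ∈ X.Res J c,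
      X.δ x y = X.δ x p * X.δ p y ∧ ℓ (X.δ x y) = ℓ (X.δ x p) + ℓ (X.δ p y) := by
  have hne : Set.Nonempty {n | ∃ y ∈ X.Res J c, ℓ (X.δ x y) = n} :=
    ⟨ℓ (X.δ x c), c, self_mem_res X c, rfl⟩
  obtain ⟨p, hp, hpl⟩ := Nat.sInf_mem hne
  have hpmin : ∀ y ∈ X.Res J c, ℓ (X.δ x p) ≤ ℓ (X.δ x y) := by
    intro y hy
    rw [hpl]
    exact Nat.sInf_le ⟨y, hy, rfl⟩
  have humin : ∀ v ∈ WJ cs J, ℓ (X.δ x p) ≤ ℓ (X.δ x p * v) := by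
    intro v hv
    obtain ⟨ω, hωJ, hred, hπ⟩ := exists_reduced_word_WJ cs hv
    obtain ⟨y, hy1, hy2⟩ := walkx X x p ω
    have hymem : y ∈ X.Res J c := hy2 c J hωJ hp
    have : X.δ x y = X.δ x p * v := by rw [hy1, ← hπ]
    have := hpmin y hymem
    rwa [‹X.δ x y = X.δ x p * v›] at this
  have hadd : ∀ v ∈ WJ cs J, ℓ (X.δ x p * v) = ℓ (X.δ x p) + ℓ v :=
    min_coset_additive cs humin
  refine ⟨p, hp, ?_⟩
  suffices H : ∀ (n : ℕ) (y : C), y ∈ X.Res J c → ℓ (X.δ p y) = n →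
      X.δ x y = X.δ x p * X.δ p y ∧ ℓ (X.δ x y) = ℓ (X.δ x p) + ℓ (X.δ p y) by
    exact fun y hy => H (ℓ (X.δ p y)) y hy rfl
  intro n
  induction n using Nat.strong_induction_on with
  | _ n ih =>
      intro y hy hn
      have hwJ : X.δ p y ∈ WJ cs J := res_delta_mem X hp hy
      by_cases hone : X.δ p y = 1
      · have := eq_of_delta_eq_one X hone
        subst this
        rw [hone, mul_one, cs.length_one]
        exact ⟨rfl, by omega⟩
      · obtain ⟨i, hiJ, w', hw', hweq, hlen⟩ := exists_right_descent_WJ cs hwJ hone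
        obtain ⟨z, hz1, hz2⟩ := X.exists_delta p y i
        have hpz : X.δ p z = w' := by
          rw [hz2, hweq, cs.simple_mul_simple_cancel_right]
        have hzmem : z ∈ X.Res J c := by
          have hz₁z : X.δ y z = ss i := hz1
          rcases X.delta_mem_pair c y z i hz₁z with hc | hc
          · rw [mem_res_iff, hc]; exact hy
          · rw [mem_res_iff, hc]; exact mul_mem hy (simple_mem_WJ cs hiJ)
        obtain ⟨ihz1, ihz2⟩ := ih (ℓ w') (by omega) z hzmem (by rw [hpz])
        rw [hpz] at ihz1 ihz2
        have hzy : X.δ z y = ss i := panel_symm X hz1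
        have e1 : X.δ x z * ss i = X.δ x p * X.δ p y := by
          rw [ihz1, hweq, mul_assoc]
        have hA := hadd (X.δ p y) hwJ
        have hB := hadd w' hw'
        have hlen3 : ℓ (X.δ x z * ss i) = ℓ (X.δ x z) + 1 := by
          rw [e1, hA, ihz1, hB]
          omega
        have hfin := X.delta_eq_of_length x z y i hzy hlen3
        constructor
        · rw [hfin, e1]
        · rw [hfin, e1, hA]

lemma isProj_unique {R : Set C} {x p q : C} (hp : X.IsProj R x p) (hq : X.IsProj R x q) :
    p = q := by
  by_contra hne
  have h1 := hp.2 q hq.1 (fun hc => hne hc.symm)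
  have h2 := hq.2 p hp.1 hne
  omega

lemma proj_eq_of_isProj {R : Set C} {x p : C} (h : X.IsProj R x p) : X.proj R x = p := by
  unfold RAB.Building.proj
  rw [dif_pos ⟨p, h⟩]
  exact isProj_unique X (Exists.choose_spec (⟨p, h⟩ : ∃ p, X.IsProj R x p)) h

/-- The full gate property of the projection to a residue. -/
lemma proj_spec (J : Set B) (c x : C) :
    X.proj (X.Res J c) x ∈ X.Res J c ∧
      (∀ y ∈ X.Res J c,
        X.δ x y = X.δ x (X.proj (X.Res J c) x) * X.δ (X.proj (X.Res J c) x) y ∧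
        ℓ (X.δ x y) = ℓ (X.δ x (X.proj (X.Res J c) x)) + ℓ (X.δ (X.proj (X.Res J c) x) y)) := by
  obtain ⟨p, hp, hgate⟩ := gate X J c x
  have hproj : X.IsProj (X.Res J c) x p := by
    refine ⟨hp, ?_⟩
    intro y hy hne
    obtain ⟨h1, h2⟩ := hgate y hy
    unfold RAB.Building.dist
    rw [h2]
    have : X.δ p y ≠ 1 := fun hc => hne ((eq_of_delta_eq_one X hc).symm)
    have : ℓ (X.δ p y) ≠ 0 := fun hc => this (cs.length_eq_zero_iff.mp hc)
    omega
  rw [proj_eq_of_isProj X hproj]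
  exact ⟨hp, hgate⟩

lemma proj_isProj (J : Set B) (c x : C) :
    X.IsProj (X.Res J c) x (X.proj (X.Res J c) x) := by
  obtain ⟨hp, hgate⟩ := proj_spec X J c x
  refine ⟨hp, ?_⟩
  intro y hy hne
  obtain ⟨h1, h2⟩ := hgate y hy
  unfold RAB.Building.dist
  rw [h2]
  have h3 : X.δ (X.proj (X.Res J c) x) y ≠ 1 := fun hc => hne ((eq_of_delta_eq_one X hc).symm)
  have h4 : ℓ (X.δ (X.proj (X.Res J c) x) y) ≠ 0 := fun hc => h3 (cs.length_eq_zero_iff.mp hc)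
  omega

lemma eq_proj_of_dist_eq {J : Set B} {c x y : C} (hy : y ∈ X.Res J c)
    (hd : X.dist x y = X.dist x (X.proj (X.Res J c) x)) : y = X.proj (X.Res J c) x := by
  by_contra hne
  have := (proj_isProj X J c x).2 y hy hne
  omega

/-- Coset-additivity of the Weyl distance to the projection. -/
lemma proj_coset_additive (J : Set B) (c x : C) :
    ∀ v ∈ WJ cs J, ℓ (X.δ x (X.proj (X.Res J c) x) * v)
      = ℓ (X.δ x (X.proj (X.Res J c) x)) + ℓ v := by
  obtain ⟨hqmem, hgate⟩ := proj_spec X J c x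
  apply min_coset_additive cs
  intro v hv
  obtain ⟨ω, hωJ, hred, hπ⟩ := exists_reduced_word_WJ cs hv
  obtain ⟨y, hy1, hy2⟩ := walkx X x (X.proj (X.Res J c) x) ω
  have hymem : y ∈ X.Res J c := hy2 c J hωJ hqmem
  have hxy : X.δ x y = X.δ x (X.proj (X.Res J c) x) * v := by rw [hy1, ← hπ]
  have := (hgate y hymem).2
  rw [hxy] at this
  omega

section Core

variable {J K : Set B} {p p' : C}

lemma hJadd_of (hp : X.proj (X.Res J p) p' = p) :
    ∀ v ∈ WJ cs J, ℓ (X.δ p' p * v) = ℓ (X.δ p' p) + ℓ v := by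
  have := proj_coset_additive X J p p'
  rwa [hp] at this

lemma hKadd_of (hp' : X.proj (X.Res K p') p = p') :
    ∀ u ∈ WJ cs K, ℓ (u * X.δ p' p) = ℓ u + ℓ (X.δ p' p) := by
  have base := proj_coset_additive X K p' p
  rw [hp'] at base
  intro u hu
  have h1 := base u⁻¹ (inv_mem hu)
  have h2 : X.δ p p' = (X.δ p' p)⁻¹ := delta_inv X p' p
  have h3 : (u * X.δ p' p)⁻¹ = X.δ p p' * u⁻¹ := by rw [h2]; group
  calc ℓ (u * X.δ p' p) = ℓ ((u * X.δ p' p)⁻¹) := (cs.length_inv _).symm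
    _ = ℓ (X.δ p p' * u⁻¹) := by rw [h3]
    _ = ℓ (X.δ p p') + ℓ u⁻¹ := h1
    _ = ℓ u + ℓ (X.δ p' p) := by rw [cs.length_inv, h2, cs.length_inv]; omega

/-- The core projection computation. -/
lemma core (hp : X.proj (X.Res J p) p' = p) (hp' : X.proj (X.Res K p') p = p')
    {x' : C} (hx' : x' ∈ X.Res K p') {u₀ a : W}
    (ha : a ∈ WJ cs (Kone cs K J (X.δ p' p)))
    (hdecomp : (X.δ p' x')⁻¹ = u₀ * a)
    (hu₀min : ∀ b ∈ WJ cs (Kone cs K J (X.δ p' p)), ℓ u₀ ≤ ℓ (u₀ * b)) :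
    X.δ x' (X.proj (X.Res J p) x') = u₀ * X.δ p' p ∧
    X.δ p (X.proj (X.Res J p) x') = (X.δ p' p)⁻¹ * a⁻¹ * X.δ p' p := by
  have hJadd := hJadd_of X hp
  have hKadd := hKadd_of X hp'
  have hu : X.δ p' x' ∈ WJ cs K := hx'
  have hu₀K : u₀ ∈ WJ cs K := by
    have he : u₀ = (X.δ p' x')⁻¹ * a⁻¹ := by rw [hdecomp]; group
    rw [he]
    exact mul_mem (inv_mem hu) (inv_mem (WJ_mono cs (Kone_subset cs K J _) ha))
  have hkil := kil cs hJadd hKadd hu₀K hu₀min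
  have hgate' := (proj_spec X K p' p).2
  have hpx' : X.δ p x' = X.δ p p' * X.δ p' x' := by
    have := (hgate' x' hx').1
    rwa [hp'] at this
  have hppinv : (X.δ p p')⁻¹ = X.δ p' p := by
    rw [delta_inv X p' p, inv_inv]
  have hx'p : X.δ x' p = u₀ * a * X.δ p' p := by
    have h4 : X.δ x' p = (X.δ p x')⁻¹ := delta_inv X p x'
    rw [h4, hpx', mul_inv_rev, hdecomp, hppinv]
  have hconjA : (X.δ p' p)⁻¹ * a * (X.δ p' p) ∈ WJ cs (Kone cs J K (X.δ p' p)⁻¹) :=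
    conj_mem_Wone cs hJadd hKadd ha
  have hconjAJ : (X.δ p' p)⁻¹ * a * (X.δ p' p) ∈ WJ cs J :=
    WJ_mono cs (Kone_subset cs J K _) hconjA
  obtain ⟨hqmem, hgate⟩ := proj_spec X J p x'
  have hpq : p ∈ X.Res J p := self_mem_res X p
  have hqp : X.δ (X.proj (X.Res J p) x') p ∈ WJ cs J := res_delta_mem X hqmem hpq
  have hsplit := (hgate p hpq).1
  have hvJ : ((X.δ p' p)⁻¹ * a * (X.δ p' p)) * (X.δ (X.proj (X.Res J p) x') p)⁻¹ ∈ WJ cs J :=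
    mul_mem hconjAJ (inv_mem hqp)
  have hδx'q : X.δ x' (X.proj (X.Res J p) x')
      = u₀ * X.δ p' p * (((X.δ p' p)⁻¹ * a * (X.δ p' p)) * (X.δ (X.proj (X.Res J p) x') p)⁻¹) := by
    have h6 : X.δ x' (X.proj (X.Res J p) x') = X.δ x' p * (X.δ (X.proj (X.Res J p) x') p)⁻¹ := by
      rw [hsplit]; group
    rw [h6, hx'p]
    group
  have hlq : ℓ (X.δ x' (X.proj (X.Res J p) x'))
      = ℓ u₀ + ℓ (X.δ p' p)
        + ℓ (((X.δ p' p)⁻¹ * a * (X.δ p' p)) * (X.δ (X.proj (X.Res J p) x') p)⁻¹) := by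
    rw [hδx'q]
    exact hkil _ hvJ
  obtain ⟨ω, hωJ, hred, hπ⟩ := exists_reduced_word_WJ cs (inv_mem hvJ)
  obtain ⟨y₁, hy₁1, hy₁2⟩ := walkx X x' (X.proj (X.Res J p) x') ω
  have hy₁mem : y₁ ∈ X.Res J p := hy₁2 p J hωJ hqmem
  have hy₁δ : X.δ x' y₁ = u₀ * X.δ p' p := by
    rw [hy₁1, ← hπ, hδx'q]
    group
  have hle : ℓ (X.δ x' (X.proj (X.Res J p) x')) ≤ ℓ (X.δ x' y₁) := by
    by_cases he : y₁ = X.proj (X.Res J p) x'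
    · rw [he]
    · have := (proj_isProj X J p x').2 y₁ hy₁mem he
      unfold RAB.Building.dist at this
      omega
  have hu₀w : ℓ (u₀ * X.δ p' p) = ℓ u₀ + ℓ (X.δ p' p) := by
    have := hkil 1 (one_mem _)
    simpa using this
  have hlv : ℓ (((X.δ p' p)⁻¹ * a * (X.δ p' p)) * (X.δ (X.proj (X.Res J p) x') p)⁻¹) = 0 := by
    rw [hy₁δ, hu₀w] at hle
    omega
  have hv1 : ((X.δ p' p)⁻¹ * a * (X.δ p' p)) * (X.δ (X.proj (X.Res J p) x') p)⁻¹ = 1 :=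
    cs.length_eq_zero_iff.mp hlv
  constructor
  · rw [hδx'q, hv1, mul_one]
  · have h8 : X.δ (X.proj (X.Res J p) x') p = (X.δ p' p)⁻¹ * a * (X.δ p' p) :=
      (mul_inv_eq_one.mp hv1).symm
    rw [delta_inv X (X.proj (X.Res J p) x') p, h8]
    group

lemma proj_mem (hp : X.proj (X.Res J p) p' = p) (hp' : X.proj (X.Res K p') p = p') :
    ∀ x' ∈ X.Res K p',
      X.proj (X.Res J p) x' ∈ X.Res (Kone cs J K (X.δ p p')) p := by
  intro x' hx'
  have hne : Set.Nonempty
      {n | ∃ b ∈ WJ cs (Kone cs K J (X.δ p' p)), ℓ ((X.δ p' x')⁻¹ * b) = n} :=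
    ⟨_, 1, one_mem _, rfl⟩
  obtain ⟨b₀, hb₀, hb₀l⟩ := Nat.sInf_mem hne
  have hdecomp : (X.δ p' x')⁻¹ = ((X.δ p' x')⁻¹ * b₀) * b₀⁻¹ := by group
  have hmin : ∀ b ∈ WJ cs (Kone cs K J (X.δ p' p)),
      ℓ ((X.δ p' x')⁻¹ * b₀) ≤ ℓ (((X.δ p' x')⁻¹ * b₀) * b) := by
    intro b hb
    rw [hb₀l, mul_assoc]
    exact Nat.sInf_le ⟨b₀ * b, mul_mem hb₀ hb, rfl⟩
  obtain ⟨h1, h2⟩ := core X hp hp' hx' (inv_mem hb₀) hdecomp hmin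
  rw [mem_res_iff, h2]
  have hc := conj_mem_Wone cs (hJadd_of X hp) (hKadd_of X hp') (a := (b₀⁻¹)⁻¹)
    (by rw [inv_inv]; exact hb₀)
  have hKoneeq : Kone cs J K (X.δ p' p)⁻¹ = Kone cs J K (X.δ p p') := by
    rw [delta_inv X p' p]
  rw [← hKoneeq]
  exact hc

lemma roundtrip (hp : X.proj (X.Res J p) p' = p) (hp' : X.proj (X.Res K p') p = p') :
    ∀ x ∈ X.Res (Kone cs J K (X.δ p p')) p,
      X.proj (X.Res K p') x ∈ X.Res (Kone cs K J (X.δ p' p)) p' ∧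
      X.proj (X.Res J p) (X.proj (X.Res K p') x) = x := by
  intro x hx
  have hppinv : (X.δ p p')⁻¹ = X.δ p' p := by rw [delta_inv X p' p, inv_inv]
  have hp'pinv : (X.δ p' p)⁻¹ = X.δ p p' := by rw [delta_inv X p' p]
  have hv : X.δ p x ∈ WJ cs (Kone cs J K (X.δ p p')) := hx
  have hxJ : x ∈ X.Res J p := res_mono X (Kone_subset cs J K _) p hx
  have hswap := core X (J := K) (K := J) (p := p') (p' := p) hp' hp hxJ
    (a := (X.δ p x)⁻¹) (inv_mem hv) (one_mul _).symm
    (by intro b hb; rw [cs.length_one, one_mul]; exact Nat.zero_le _)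
  obtain ⟨hs1, hs2⟩ := hswap
  rw [inv_inv] at hs2
  have hs2' : X.δ p' (X.proj (X.Res K p') x) = (X.δ p p')⁻¹ * X.δ p x * X.δ p p' := hs2
  have hmem'' : X.proj (X.Res K p') x ∈ X.Res (Kone cs K J (X.δ p' p)) p' := by
    rw [mem_res_iff, hs2']
    have hc := conj_mem_Wone cs (J := K) (K := J) (w₁ := X.δ p p')
      (hJadd_of X hp') (hKadd_of X hp) (a := X.δ p x) hv
    have hKoneeq : Kone cs K J (X.δ p p')⁻¹ = Kone cs K J (X.δ p' p) := by
      rw [hppinv]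
    rw [← hKoneeq]
    exact hc
  refine ⟨hmem'', ?_⟩
  -- apply the unswapped core to x'' := proj (Res K p') x
  have hx''mem : X.proj (X.Res K p') x ∈ X.Res K p' := (proj_spec X K p' x).1
  have hainv : (X.δ p' (X.proj (X.Res K p') x))⁻¹ ∈ WJ cs (Kone cs K J (X.δ p' p)) := by
    rw [hs2']
    have hc := conj_mem_Wone cs (J := K) (K := J) (w₁ := X.δ p p')
      (hJadd_of X hp') (hKadd_of X hp) (a := (X.δ p x)⁻¹) (inv_mem hv)
    have hKoneeq : Kone cs K J (X.δ p p')⁻¹ = Kone cs K J (X.δ p' p) := by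
      rw [hppinv]
    rw [← hKoneeq]
    have he : ((X.δ p p')⁻¹ * X.δ p x * X.δ p p')⁻¹
        = (X.δ p p')⁻¹ * (X.δ p x)⁻¹ * X.δ p p' := by group
    rw [he]
    exact hc
  have hcore2 := core X hp hp' hx''mem (a := (X.δ p' (X.proj (X.Res K p') x))⁻¹)
    hainv (one_mul _).symm
    (by intro b hb; rw [cs.length_one, one_mul]; exact Nat.zero_le _)
  obtain ⟨hc1, _⟩ := hcore2
  rw [one_mul] at hc1
  -- δ x'' x = δ p' p as well
  have hs1' : X.δ x (X.proj (X.Res K p') x) = X.δ p p' := by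
    rw [hs1, one_mul]
  have hd : X.δ (X.proj (X.Res K p') x) x = X.δ p' p := by
    rw [delta_inv X x (X.proj (X.Res K p') x), hs1', hppinv]
  have hdist : X.dist (X.proj (X.Res K p') x) x
      = X.dist (X.proj (X.Res K p') x) (X.proj (X.Res J p) (X.proj (X.Res K p') x)) := by
    unfold RAB.Building.dist
    rw [hd, hc1]
  exact (eq_proj_of_dist_eq X hxJ hdist).symm

lemma projSet_eq (hp : X.proj (X.Res J p) p' = p) (hp' : X.proj (X.Res K p') p = p') :
    X.projSet (X.Res J p) (X.Res K p') = X.Res (Kone cs J K (X.δ p p')) p := by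
  apply Set.Subset.antisymm
  · rintro y ⟨x', hx', rfl⟩
    exact proj_mem X hp hp' x' hx'
  · intro x hx
    obtain ⟨hmem, heq⟩ := roundtrip X hp hp' x hx
    exact ⟨X.proj (X.Res K p') x, (proj_spec X K p' x).1, heq⟩

lemma proj_agree (hp : X.proj (X.Res J p) p' = p) (hp' : X.proj (X.Res K p') p = p') :
    ∀ y' ∈ X.Res (Kone cs K J (X.δ p' p)) p',
      X.proj (X.Res (Kone cs J K (X.δ p p')) p) y' = X.proj (X.Res J p) y' := by
  intro y' hy'
  have hy'K : y' ∈ X.Res K p' := res_mono X (Kone_subset cs K J _) p' hy'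
  have hq := proj_mem X hp hp' y' hy'K
  apply proj_eq_of_isProj
  refine ⟨hq, ?_⟩
  intro z hz hne
  exact (proj_isProj X J p y').2 z (res_mono X (Kone_subset cs J K _) p hz) hne

lemma parallel_half (hp : X.proj (X.Res J p) p' = p) (hp' : X.proj (X.Res K p') p = p') :
    X.projSet (X.Res (Kone cs K J (X.δ p' p)) p') (X.Res (Kone cs J K (X.δ p p')) p)
      = X.Res (Kone cs K J (X.δ p' p)) p' := by
  apply Set.Subset.antisymm
  · rintro y ⟨x, hx, rfl⟩
    have hagree := proj_agree X (J := K) (K := J) (p := p') (p' := p) hp' hp x hx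
    rw [hagree]
    exact (roundtrip X hp hp' x hx).1
  · intro y' hy'
    obtain ⟨hmem, heq⟩ := roundtrip X (J := K) (K := J) (p := p') (p' := p) hp' hp y' hy'
    refine ⟨X.proj (X.Res J p) y', hmem, ?_⟩
    have hagree := proj_agree X (J := K) (K := J) (p := p') (p' := p) hp' hp
      (X.proj (X.Res J p) y') hmem
    rw [hagree]
    exact heq

end Core

end BuildingLemmas

end S7


open S7

/-- For any two residues `R`, `R'`, the sets `proj_{R'}(R)` and
`proj_R(R')` are parallel residues. -/
theorem statement7 {B W C : Type*} [Fintype B] [Group W] {M : CoxeterMatrix B}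
    (cs : CoxeterSystem M W) (X : RAB.Building cs C)
    (R R' : Set C) (hR : X.IsResidue R) (hR' : X.IsResidue R') :
    X.IsResidue (X.projSet R' R) ∧ X.IsResidue (X.projSet R R') ∧
      X.Parallel (X.projSet R' R) (X.projSet R R') := by
  classical
  obtain ⟨J, c, hc⟩ := hR
  obtain ⟨K, c', hc'⟩ := hR'
  have hcR : c ∈ R := by rw [hc]; exact self_mem_res X c
  have hc'R' : c' ∈ R' := by rw [hc']; exact self_mem_res X c'
  have hTne : Set.Nonempty {n | ∃ x ∈ R, ∃ y ∈ R', X.dist x y = n} :=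
    ⟨X.dist c c', c, hcR, c', hc'R', rfl⟩
  obtain ⟨p, hpR, p', hp'R', hdmin⟩ := Nat.sInf_mem hTne
  have hmin2 : ∀ x ∈ R, ∀ y ∈ R', X.dist p p' ≤ X.dist x y := by
    intro x hx y hy
    rw [hdmin]
    exact Nat.sInf_le ⟨x, hx, y, hy, rfl⟩
  have hRp : R = X.Res J p := by
    rw [hc]
    exact res_eq X (hc ▸ hpR)
  have hR'p : R' = X.Res K p' := by
    rw [hc']
    exact res_eq X (hc' ▸ hp'R')
  have hpmem : p ∈ X.Res J p := self_mem_res X p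
  have hp'mem : p' ∈ X.Res K p' := self_mem_res X p'
  have hgp : X.proj (X.Res J p) p' = p := by
    refine (eq_proj_of_dist_eq X hpmem ?_).symm
    have hq := (proj_spec X J p p').1
    have h1 : X.dist p' (X.proj (X.Res J p) p') ≤ X.dist p' p := by
      by_cases he : p = X.proj (X.Res J p) p'
      · exact le_of_eq (congrArg (X.dist p') he.symm)
      · exact le_of_lt ((proj_isProj X J p p').2 p hpmem he)
    have h2 : X.dist p p' ≤ X.dist (X.proj (X.Res J p) p') p' :=
      hmin2 _ (by rw [hRp]; exact hq) p' hp'R'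
    have h3 := dist_symm X p' p
    have h4 := dist_symm X p' (X.proj (X.Res J p) p')
    have h5 := dist_symm X (X.proj (X.Res J p) p') p'
    omega
  have hgp' : X.proj (X.Res K p') p = p' := by
    refine (eq_proj_of_dist_eq X hp'mem ?_).symm
    have hq := (proj_spec X K p' p).1
    have h1 : X.dist p (X.proj (X.Res K p') p) ≤ X.dist p p' := by
      by_cases he : p' = X.proj (X.Res K p') p
      · exact le_of_eq (congrArg (X.dist p) he.symm)
      · exact le_of_lt ((proj_isProj X K p' p).2 p' hp'mem he)
    have h2 : X.dist p p' ≤ X.dist p (X.proj (X.Res K p') p) :=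
      hmin2 p hpR _ (by rw [hR'p]; exact hq)
    omega
  have hA : X.projSet (X.Res J p) (X.Res K p') = X.Res (Kone cs J K (X.δ p p')) p :=
    projSet_eq X hgp hgp'
  have hA' : X.projSet (X.Res K p') (X.Res J p) = X.Res (Kone cs K J (X.δ p' p)) p' :=
    projSet_eq X (J := K) (K := J) (p := p') (p' := p) hgp' hgp
  rw [hRp, hR'p]
  have hpar : X.Parallel (X.projSet (X.Res K p') (X.Res J p))
      (X.projSet (X.Res J p) (X.Res K p')) := by
    constructor
    · rw [hA', hA]
      exact parallel_half X hgp hgp'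
    · rw [hA', hA]
      exact parallel_half X (J := K) (K := J) (p := p') (p' := p) hgp' hgp
  exact ⟨⟨Kone cs K J (X.δ p' p), p', hA'⟩, ⟨Kone cs J K (X.δ p p'), p, hA⟩, hpar⟩
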